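/- Let V be a finite-dimensional real inner product space, let σ⁰ ∈ V with σ⁰ ≠ 0, and let W : V → ℝ be a continuous function with W(σ⁰) > 0. Let (cₙ) be a sequence of nonnegative real numbers with cₙ → 0, and for each n let Cₙ : V → V be a self-adjoint positive definite linear operator such that: (i) W(σ) ≤ ⟨σ, Cₙ⁻¹σ⟩ for every σ ∈ V; (ii) ⟨σ⁰, Cₙ⁻¹σ⁰⟩ ≤ W(σ⁰) + cₙ; (iii) ⟨e, Cₙe⟩ ≤ cₙ‖e‖² for every e ∈ V with ⟨e, σ⁰⟩ = 0. Then for every ε⁰ ∈ V with ⟨σ⁰, ε⁰⟩ = W(σ⁰), the sequence Cₙε⁰ converges to σ⁰ in V. -/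

import Mathlib

open scoped RealInnerProductSpace
open Filter

section Aux

variable {V : Type*} [NormedAddCommGroup V] [InnerProductSpace ℝ V]

private lemma expand_aux (T : V ≃ₗ[ℝ] V) (hsa : ∀ u v : V, ⟪T u, v⟫ = ⟪u, T v⟫)
    (a b : V) : ⟪a + b, T (a + b)⟫ = ⟪a, T a⟫ + 2 * ⟪a, T b⟫ + ⟪b, T b⟫ := by
  have h : ⟪b, T a⟫ = ⟪a, T b⟫ := by rw [real_inner_comm, hsa]
  rw [map_add, inner_add_left, inner_add_right, inner_add_right, h]
  ring

private lemma cs_aux (T : V ≃ₗ[ℝ] V) (hsa : ∀ u v : V, ⟪T u, v⟫ = ⟪u, T v⟫)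
    (hpos : ∀ u : V, 0 ≤ ⟪u, T u⟫) (u v : V) :
    ⟪u, T v⟫ ^ 2 ≤ ⟪u, T u⟫ * ⟪v, T v⟫ := by
  have key : ∀ t : ℝ, 0 ≤ ⟪v, T v⟫ * (t * t) + (2 * ⟪u, T v⟫) * t + ⟪u, T u⟫ := by
    intro t
    have h := hpos (u + t • v)
    rw [expand_aux T hsa] at h
    have h1 : ⟪u, T (t • v)⟫ = t * ⟪u, T v⟫ := by
      rw [map_smul, real_inner_smul_right]
    have h2 : ⟪t • v, T (t • v)⟫ = t * t * ⟪v, T v⟫ := by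
      rw [map_smul, real_inner_smul_left, real_inner_smul_right]; ring
    nlinarith [h]
  have hd := discrim_le_zero key
  rw [discrim] at hd
  nlinarith [hd]

private lemma q_add_le (T : V ≃ₗ[ℝ] V) (hsa : ∀ u v : V, ⟪T u, v⟫ = ⟪u, T v⟫)
    (hpos : ∀ u : V, 0 ≤ ⟪u, T u⟫) (a b : V) :
    ⟪a + b, T (a + b)⟫ ≤ 2 * ⟪a, T a⟫ + 2 * ⟪b, T b⟫ := by
  have h1 := expand_aux T hsa a b
  have h2 : ⟪a - b, T (a - b)⟫ = ⟪a, T a⟫ - 2 * ⟪a, T b⟫ + ⟪b, T b⟫ := by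
    have := expand_aux T hsa a (-b)
    simpa [inner_neg_left, inner_neg_right, sub_eq_add_neg] using this
  nlinarith [hpos (a - b)]

end Aux

set_option maxHeartbeats 2000000 in
/-- Abstract core of Theorem 3 of Milton & Camar-Eddine: if `Cₙ` are self-adjoint
positive definite operators nearly attaining the complementary energy bound `W` at `σ⁰`
and with small energy on the orthogonal complement of `σ⁰`, then for every `ε⁰` with
`⟪σ⁰, ε⁰⟫ = W σ⁰` one has `Cₙ ε⁰ → σ⁰`. -/
theorem weak_G_closure_pentamode
    {V : Type*} [NormedAddCommGroup V] [InnerProductSpace ℝ V] [FiniteDimensional ℝ V]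
    (σ0 : V) (hσ0 : σ0 ≠ 0)
    (W : V → ℝ) (hWcont : Continuous W) (hWpos : 0 < W σ0)
    (c : ℕ → ℝ) (hc_nonneg : ∀ n, 0 ≤ c n)
    (hc_lim : Filter.Tendsto c Filter.atTop (nhds 0))
    (C : ℕ → (V ≃ₗ[ℝ] V))
    (hC_sa : ∀ n, ∀ u v : V, ⟪(C n) u, v⟫ = ⟪u, (C n) v⟫)
    (hC_pd : ∀ n, ∀ u : V, u ≠ 0 → 0 < ⟪u, (C n) u⟫)
    (hbound : ∀ n, ∀ σ : V, W σ ≤ ⟪σ, (C n).symm σ⟫)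
    (hattain : ∀ n, ⟪σ0, (C n).symm σ0⟫ ≤ W σ0 + c n)
    (hsmall : ∀ n, ∀ e : V, ⟪e, σ0⟫ = 0 → ⟪e, (C n) e⟫ ≤ c n * ‖e‖ ^ 2) :
    ∀ ε0 : V, ⟪σ0, ε0⟫ = W σ0 →
      Filter.Tendsto (fun n => (C n) ε0) Filter.atTop (nhds σ0) := by
  intro ε0 hε0
  have hK : (0:ℝ) < ‖σ0‖ ^ 2 := pow_pos (norm_pos_iff.mpr hσ0) 2
  have hqpos : ∀ n, 0 < ⟪σ0, (C n) σ0⟫ := fun n => hC_pd n σ0 hσ0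
  have hqnn : ∀ n, ∀ u : V, 0 ≤ ⟪u, (C n) u⟫ := by
    intro n u
    rcases eq_or_ne u 0 with h | h
    · simp [h]
    · exact (hC_pd n u h).le
  have hWc : ∀ n, 0 < W σ0 + c n := fun n => by linarith [hc_nonneg n]
  -- Step 1: lower bound for q n σ0 := ⟪σ0, (C n) σ0⟫
  have step1 : ∀ n, ‖σ0‖ ^ 2 * ‖σ0‖ ^ 2 ≤ (W σ0 + c n) * ⟪σ0, (C n) σ0⟫ := by
    intro n
    set ε := (C n).symm σ0 with hε
    have h1 : ⟪ε, (C n) σ0⟫ = ‖σ0‖ ^ 2 := by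
      rw [← hC_sa n ε σ0, hε, LinearEquiv.apply_symm_apply, real_inner_self_eq_norm_sq]
    have h2 : ⟪ε, (C n) ε⟫ = ⟪σ0, (C n).symm σ0⟫ := by
      rw [hε, LinearEquiv.apply_symm_apply, real_inner_comm]
    have hcs := cs_aux (C n) (hC_sa n) (hqnn n) ε σ0
    rw [h1, h2] at hcs
    have hb := hattain n
    nlinarith [hqpos n, hbound n σ0, hWpos]
  -- Step 2: the comparison states σs n, orthogonal errors e n
  set μ : ℕ → ℝ := fun n => ‖σ0‖ ^ 2 / ⟪σ0, (C n) σ0⟫ with hμ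
  set σs : ℕ → V := fun n => μ n • (C n) σ0 with hσs
  set e : ℕ → V := fun n => σs n - σ0 with he
  have hμq : ∀ n, μ n * ⟪σ0, (C n) σ0⟫ = ‖σ0‖ ^ 2 := by
    intro n
    rw [hμ]
    exact div_mul_cancel₀ _ (hqpos n).ne'
  have he_perp : ∀ n, ⟪e n, σ0⟫ = 0 := by
    intro n
    rw [he]
    simp only [inner_sub_left, hσs, real_inner_smul_left]
    rw [hC_sa n σ0 σ0, hμq n, real_inner_self_eq_norm_sq]
    ring
  -- Step 3: bound on ‖e n‖
  have he_bound : ∀ n, ‖e n‖ ^ 2 ≤ c n * (W σ0 + c n) := by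
    intro n
    have hq := hqpos n
    have h2 : ⟪e n, e n⟫ = ⟪e n, σs n⟫ - ⟪e n, σ0⟫ := inner_sub_right _ _ _
    have h2' : ⟪e n, σs n⟫ = μ n * ⟪e n, (C n) σ0⟫ := real_inner_smul_right _ _ _
    have h1 : ⟪σ0, (C n) σ0⟫ * ‖e n‖ ^ 2 = ‖σ0‖ ^ 2 * ⟪e n, (C n) σ0⟫ := by
      rw [← real_inner_self_eq_norm_sq, h2, h2', he_perp n, sub_zero, ← mul_assoc,
        mul_comm (⟪σ0, (C n) σ0⟫) (μ n), hμq n]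
    have hcs := cs_aux (C n) (hC_sa n) (hqnn n) (e n) σ0
    have hsm := hsmall n (e n) (he_perp n)
    have h3 : ⟪e n, (C n) σ0⟫ ^ 2 ≤ (c n * ‖e n‖ ^ 2) * ⟪σ0, (C n) σ0⟫ :=
      hcs.trans (mul_le_mul_of_nonneg_right hsm hq.le)
    have hA : (0:ℝ) ≤ c n * ‖e n‖ ^ 2 := mul_nonneg (hc_nonneg n) (sq_nonneg _)
    have h4 : (⟪σ0, (C n) σ0⟫ * ‖e n‖ ^ 2) ^ 2 ≤
        ((W σ0 + c n) * ⟪σ0, (C n) σ0⟫) * ((c n * ‖e n‖ ^ 2) * ⟪σ0, (C n) σ0⟫) := by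
      rw [h1]
      calc (‖σ0‖ ^ 2 * ⟪e n, (C n) σ0⟫) ^ 2
          = (‖σ0‖ ^ 2 * ‖σ0‖ ^ 2) * ⟪e n, (C n) σ0⟫ ^ 2 := by ring
        _ ≤ (‖σ0‖ ^ 2 * ‖σ0‖ ^ 2) * ((c n * ‖e n‖ ^ 2) * ⟪σ0, (C n) σ0⟫) :=
            mul_le_mul_of_nonneg_left h3 (by positivity)
        _ ≤ ((W σ0 + c n) * ⟪σ0, (C n) σ0⟫) * ((c n * ‖e n‖ ^ 2) * ⟪σ0, (C n) σ0⟫) :=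
            mul_le_mul_of_nonneg_right (step1 n) (mul_nonneg hA hq.le)
    have h5 : ‖e n‖ ^ 2 * ‖e n‖ ^ 2 ≤ (c n * (W σ0 + c n)) * ‖e n‖ ^ 2 := by
      nlinarith [h4, hq, mul_pos hq hq, sq_nonneg (‖e n‖ ^ 2)]
    nlinarith [h5, sq_nonneg (‖e n‖ ^ 2 - c n * (W σ0 + c n)), sq_nonneg (e n |> norm),
      mul_nonneg (hc_nonneg n) (hWc n).le]
  -- Step 4: e n → 0, hence σs n → σ0 and W (σs n) → W σ0
  have hcw_lim : Tendsto (fun n => c n * (W σ0 + c n)) atTop (nhds 0) := by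
    have h := hc_lim.mul ((tendsto_const_nhds (x := W σ0)).add hc_lim)
    simpa using h
  have he_lim : Tendsto (fun n => ‖e n‖) atTop (nhds 0) := by
    apply squeeze_zero (fun n => norm_nonneg _) (g := fun n => Real.sqrt (c n * (W σ0 + c n)))
    · intro n
      have h := Real.sqrt_le_sqrt (he_bound n)
      rwa [Real.sqrt_sq (norm_nonneg _)] at h
    · simpa using hcw_lim.sqrt
  have hσs_lim : Tendsto σs atTop (nhds σ0) := by
    rw [tendsto_iff_norm_sub_tendsto_zero]
    exact he_lim
  have hW_lim : Tendsto (fun n => W (σs n)) atTop (nhds (W σ0)) :=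
    (hWcont.tendsto σ0).comp hσs_lim
  -- Step 5: upper bound  W (σs n) * q n σ0 ≤ ‖σ0‖⁴
  have step5 : ∀ n, W (σs n) * ⟪σ0, (C n) σ0⟫ ≤ ‖σ0‖ ^ 2 * ‖σ0‖ ^ 2 := by
    intro n
    have hb := hbound n (σs n)
    have hp : ⟪σs n, (C n).symm (σs n)⟫ = μ n ^ 2 * ⟪σ0, (C n) σ0⟫ := by
      have h1 : (C n).symm (σs n) = μ n • σ0 := by
        rw [show σs n = μ n • (C n) σ0 from rfl, map_smul, LinearEquiv.symm_apply_apply]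
      rw [h1, show σs n = μ n • (C n) σ0 from rfl, real_inner_smul_left, real_inner_smul_right,
        real_inner_comm ((C n) σ0) σ0, hC_sa n σ0 σ0]
      ring
    have hμ2 : μ n ^ 2 * ⟪σ0, (C n) σ0⟫ * ⟪σ0, (C n) σ0⟫ = ‖σ0‖ ^ 2 * ‖σ0‖ ^ 2 := by
      have := hμq n
      nlinarith [this]
    rw [hp] at hb
    nlinarith [mul_le_mul_of_nonneg_right hb (hqpos n).le, hμ2]
  -- Step 6: q n σ0 → ‖σ0‖⁴ / W σ0
  have hq_lim : Tendsto (fun n => ⟪σ0, (C n) σ0⟫) atTop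
      (nhds (‖σ0‖ ^ 2 * ‖σ0‖ ^ 2 / W σ0)) := by
    have hlow : Tendsto (fun n => ‖σ0‖ ^ 2 * ‖σ0‖ ^ 2 / (W σ0 + c n)) atTop
        (nhds (‖σ0‖ ^ 2 * ‖σ0‖ ^ 2 / W σ0)) := by
      have h := tendsto_const_nhds (x := ‖σ0‖ ^ 2 * ‖σ0‖ ^ 2) (f := atTop (α := ℕ)) |>.div
        ((tendsto_const_nhds (x := W σ0)).add hc_lim) (by simpa using hWpos.ne')
      rw [add_zero] at h
      exact h
    have hhigh : Tendsto (fun n => ‖σ0‖ ^ 2 * ‖σ0‖ ^ 2 / W (σs n)) atTop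
        (nhds (‖σ0‖ ^ 2 * ‖σ0‖ ^ 2 / W σ0)) :=
      tendsto_const_nhds.div hW_lim hWpos.ne'
    refine tendsto_of_tendsto_of_tendsto_of_le_of_le' hlow hhigh ?_ ?_
    · refine Eventually.of_forall fun n => ?_
      rw [div_le_iff₀ (hWc n)]
      calc ‖σ0‖ ^ 2 * ‖σ0‖ ^ 2 ≤ (W σ0 + c n) * ⟪σ0, (C n) σ0⟫ := step1 n
        _ = ⟪σ0, (C n) σ0⟫ * (W σ0 + c n) := by ring
    · have hWev : ∀ᶠ n in atTop, 0 < W (σs n) := hW_lim.eventually (eventually_gt_nhds hWpos)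
      filter_upwards [hWev] with n hWn
      rw [le_div_iff₀ hWn]
      calc ⟪σ0, (C n) σ0⟫ * W (σs n) = W (σs n) * ⟪σ0, (C n) σ0⟫ := by ring
        _ ≤ ‖σ0‖ ^ 2 * ‖σ0‖ ^ 2 := step5 n
  -- Step 7: C n σ0 → (‖σ0‖² / W σ0) • σ0
  have hCσ0_lim : Tendsto (fun n => (C n) σ0) atTop (nhds ((‖σ0‖ ^ 2 / W σ0) • σ0)) := by
    have hrepr : ∀ n, (C n) σ0 = (⟪σ0, (C n) σ0⟫ / ‖σ0‖ ^ 2) • σs n := by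
      intro n
      rw [show σs n = μ n • (C n) σ0 from rfl, smul_smul]
      rw [show ⟪σ0, (C n) σ0⟫ / ‖σ0‖ ^ 2 * μ n = 1 by
        rw [hμ]; field_simp [(hqpos n).ne', hK.ne']]
      rw [one_smul]
    have h1 : Tendsto (fun n => ⟪σ0, (C n) σ0⟫ / ‖σ0‖ ^ 2) atTop
        (nhds (‖σ0‖ ^ 2 / W σ0)) := by
      have := hq_lim.div_const (‖σ0‖ ^ 2)
      rw [show ‖σ0‖ ^ 2 * ‖σ0‖ ^ 2 / W σ0 / ‖σ0‖ ^ 2 = ‖σ0‖ ^ 2 / W σ0 by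
        field_simp] at this
      exact this
    have h2 := h1.smul hσs_lim
    exact Tendsto.congr (fun n => (hrepr n).symm) h2
  -- Step 8: decompose ε0 and kill the orthogonal part
  set e0 : V := ε0 - (W σ0 / ‖σ0‖ ^ 2) • σ0 with he0def
  have he0_perp : ⟪e0, σ0⟫ = 0 := by
    rw [he0def, inner_sub_left, real_inner_smul_left, real_inner_self_eq_norm_sq,
      div_mul_cancel₀ _ hK.ne', real_inner_comm, hε0, sub_self]
  have hCe0_lim : Tendsto (fun n => (C n) e0) atTop (nhds 0) := by
    have key7 : ∀ n, ‖(C n) e0‖ ^ 2 ≤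
        2 * c n * ‖e0‖ ^ 2 * (⟪σ0, (C n) σ0⟫ / ‖σ0‖ ^ 2 + c n) := by
      intro n
      set g : V := (C n) e0 with hg
      set s : ℝ := ⟪g, σ0⟫ / ‖σ0‖ ^ 2 with hs
      set f : V := g - s • σ0 with hf
      have hf_perp : ⟪f, σ0⟫ = 0 := by
        rw [hf, inner_sub_left, real_inner_smul_left, real_inner_self_eq_norm_sq, hs,
          div_mul_cancel₀ _ hK.ne', sub_self]
      have hpyth : s ^ 2 * ‖σ0‖ ^ 2 + ‖f‖ ^ 2 = ‖g‖ ^ 2 := by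
        have hdec : g = s • σ0 + f := by rw [hf]; abel
        have hort : ⟪s • σ0, f⟫ = 0 := by
          rw [real_inner_smul_left, real_inner_comm, hf_perp, mul_zero]
        have := norm_add_sq_real (s • σ0) f
        rw [hort] at this
        rw [hdec, this, norm_smul, mul_pow, Real.norm_eq_abs, sq_abs]
        ring
      have hs2 : s ^ 2 * ‖σ0‖ ^ 2 ≤ ‖g‖ ^ 2 := by nlinarith [sq_nonneg (f |> norm)]
      have hf2 : ‖f‖ ^ 2 ≤ ‖g‖ ^ 2 := by nlinarith [sq_nonneg s, hK]
      -- q g ≤ 2 s² q σ0 + 2 c n ‖f‖²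
      have hqg : ⟪g, (C n) g⟫ ≤ 2 * (s ^ 2 * ⟪σ0, (C n) σ0⟫) + 2 * (c n * ‖f‖ ^ 2) := by
        have hdec : g = s • σ0 + f := by rw [hf]; abel
        have h1 := q_add_le (C n) (hC_sa n) (hqnn n) (s • σ0) f
        have h2 : ⟪s • σ0, (C n) (s • σ0)⟫ = s ^ 2 * ⟪σ0, (C n) σ0⟫ := by
          rw [map_smul, real_inner_smul_left, real_inner_smul_right]; ring
        have h3 := hsmall n f hf_perp
        calc ⟪g, (C n) g⟫ = ⟪s • σ0 + f, (C n) (s • σ0 + f)⟫ := by rw [← hdec]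
          _ ≤ 2 * ⟪s • σ0, (C n) (s • σ0)⟫ + 2 * ⟪f, (C n) f⟫ := h1
          _ ≤ 2 * (s ^ 2 * ⟪σ0, (C n) σ0⟫) + 2 * (c n * ‖f‖ ^ 2) := by
              rw [h2]; linarith
      have hqg' : ⟪g, (C n) g⟫ ≤ 2 * ‖g‖ ^ 2 * (⟪σ0, (C n) σ0⟫ / ‖σ0‖ ^ 2 + c n) := by
        have hb1 : s ^ 2 * ⟪σ0, (C n) σ0⟫ ≤ ‖g‖ ^ 2 * (⟪σ0, (C n) σ0⟫ / ‖σ0‖ ^ 2) := by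
          rw [mul_div_assoc']
          rw [le_div_iff₀ hK]
          calc s ^ 2 * ⟪σ0, (C n) σ0⟫ * ‖σ0‖ ^ 2
              = (s ^ 2 * ‖σ0‖ ^ 2) * ⟪σ0, (C n) σ0⟫ := by ring
            _ ≤ ‖g‖ ^ 2 * ⟪σ0, (C n) σ0⟫ := mul_le_mul_of_nonneg_right hs2 (hqpos n).le
        have hb2 : c n * ‖f‖ ^ 2 ≤ c n * ‖g‖ ^ 2 :=
          mul_le_mul_of_nonneg_left hf2 (hc_nonneg n)
        nlinarith [hqg]
      -- ‖g‖² = ⟪e0, C g⟫ and Cauchy–Schwarz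
      have hg2 : ‖g‖ ^ 2 = ⟪e0, (C n) g⟫ := by
        rw [← real_inner_self_eq_norm_sq]
        nth_rewrite 1 [hg]
        rw [hC_sa n e0 g]
      have hcs := cs_aux (C n) (hC_sa n) (hqnn n) e0 g
      have hsm := hsmall n e0 he0_perp
      -- ‖g‖⁴ ≤ (c n ‖e0‖²) * (2 ‖g‖² (q/K + c n))
      have h6 : ‖g‖ ^ 2 * ‖g‖ ^ 2 ≤
          (2 * c n * ‖e0‖ ^ 2 * (⟪σ0, (C n) σ0⟫ / ‖σ0‖ ^ 2 + c n)) * ‖g‖ ^ 2 := by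
        have hQpos : (0:ℝ) ≤ ⟪σ0, (C n) σ0⟫ / ‖σ0‖ ^ 2 + c n := by
          have := (hqpos n).le
          have := hc_nonneg n
          positivity
        have step : ⟪e0, (C n) g⟫ ^ 2 ≤
            (c n * ‖e0‖ ^ 2) * (2 * ‖g‖ ^ 2 * (⟪σ0, (C n) σ0⟫ / ‖σ0‖ ^ 2 + c n)) := by
          refine hcs.trans ?_
          have hql : (0:ℝ) ≤ ⟪g, (C n) g⟫ := hqnn n g
          have := mul_le_mul hsm hqg' hql (mul_nonneg (hc_nonneg n) (sq_nonneg _))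
          linarith [this]
        calc ‖g‖ ^ 2 * ‖g‖ ^ 2 = ⟪e0, (C n) g⟫ ^ 2 := by rw [← hg2]; ring
          _ ≤ (c n * ‖e0‖ ^ 2) * (2 * ‖g‖ ^ 2 * (⟪σ0, (C n) σ0⟫ / ‖σ0‖ ^ 2 + c n)) := step
          _ = (2 * c n * ‖e0‖ ^ 2 * (⟪σ0, (C n) σ0⟫ / ‖σ0‖ ^ 2 + c n)) * ‖g‖ ^ 2 := by ring
      have hM : (0:ℝ) ≤ 2 * c n * ‖e0‖ ^ 2 * (⟪σ0, (C n) σ0⟫ / ‖σ0‖ ^ 2 + c n) := by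
        have h1 := (hqpos n).le
        have h2 := hc_nonneg n
        positivity
      nlinarith [h6, hM, sq_nonneg (‖g‖ ^ 2 - 2 * c n * ‖e0‖ ^ 2 * (⟪σ0, (C n) σ0⟫ / ‖σ0‖ ^ 2 + c n))]
    have hM_lim : Tendsto
        (fun n => 2 * c n * ‖e0‖ ^ 2 * (⟪σ0, (C n) σ0⟫ / ‖σ0‖ ^ 2 + c n)) atTop (nhds 0) := by
      have h1 : Tendsto (fun n => ⟪σ0, (C n) σ0⟫ / ‖σ0‖ ^ 2 + c n) atTop
          (nhds (‖σ0‖ ^ 2 * ‖σ0‖ ^ 2 / W σ0 / ‖σ0‖ ^ 2 + 0)) :=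
        (hq_lim.div_const _).add hc_lim
      have h2 : Tendsto (fun n => 2 * c n * ‖e0‖ ^ 2) atTop (nhds (2 * 0 * ‖e0‖ ^ 2)) :=
        (hc_lim.const_mul 2).mul_const _
      have h := h2.mul h1
      simpa using h
    rw [tendsto_zero_iff_norm_tendsto_zero]
    apply squeeze_zero (fun n => norm_nonneg _)
      (g := fun n => Real.sqrt (2 * c n * ‖e0‖ ^ 2 * (⟪σ0, (C n) σ0⟫ / ‖σ0‖ ^ 2 + c n)))
    · intro n
      have h := Real.sqrt_le_sqrt (key7 n)
      rwa [Real.sqrt_sq (norm_nonneg _)] at h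
    · simpa using hM_lim.sqrt
  -- Final assembly
  have hdecomp : ∀ n, (C n) ε0 = (W σ0 / ‖σ0‖ ^ 2) • (C n) σ0 + (C n) e0 := by
    intro n
    rw [← map_smul, ← map_add]
    congr 1
    rw [he0def]
    abel
  have hfirst : Tendsto (fun n => (W σ0 / ‖σ0‖ ^ 2) • (C n) σ0) atTop (nhds σ0) := by
    have h := hCσ0_lim.const_smul (W σ0 / ‖σ0‖ ^ 2)
    rw [smul_smul, show W σ0 / ‖σ0‖ ^ 2 * (‖σ0‖ ^ 2 / W σ0) = 1 by
      field_simp, one_smul] at h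
    exact h
  have h := hfirst.add hCe0_lim
  rw [add_zero] at h
  exact Tendsto.congr (fun n => (hdecomp n).symm) h
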